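/- With A the quantum complete intersection as below, the space Der(A) of derivations of A has k-dimension p² + 1 + ((p−1)/e)². -/

import Mathlib

/-!
Context: `A` is the quantum complete intersection
`A = k⟨x,y⟩/(x^p, y^p, yx − q·xy)` over a field `k` of odd prime characteristic `p`,
where `q ∈ k^×` has finite multiplicative order `e` with `2 ≤ e` and `e ∣ p − 1`.
`HH¹(A) = Der(A)/IDer(A)` is the first Hochschild cohomology of `A`, a Lie algebra
with bracket induced by `[f,g] = f∘g − g∘f`.
-/

section HochschildPrelim

variable (k : Type*) [CommRing k] (A : Type*) [Ring A] [Algebra k A]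

attribute [local instance 100] LieRing.ofAssociativeRing

/-- A derivation of the `k`-algebra `A`: a `k`-linear map satisfying the Leibniz rule. -/
def IsDeriv (f : Module.End k A) : Prop := ∀ a b : A, f (a * b) = a * f b + f a * b

/-- An inner derivation `[c, -] : a ↦ c*a - a*c`. -/
def IsInner (f : Module.End k A) : Prop := ∃ c : A, ∀ a : A, f a = c * a - a * c

/-- The Lie algebra `Der(A)` of derivations, as a Lie subalgebra of `End_k(A)`
(with the commutator bracket). -/
def Der : LieSubalgebra k (Module.End k A) where
  carrier := {f | IsDeriv k A f}
  add_mem' := by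
    intro f g hf hg
    intro a b
    simp only [LinearMap.add_apply, hf a b, hg a b]
    noncomm_ring
  zero_mem' := by intro a b; simp
  smul_mem' := by
    intro c f hf
    intro a b
    simp only [LinearMap.smul_apply, hf a b, smul_add, mul_smul_comm, smul_mul_assoc]
  lie_mem' := by
    intro f g hf hg
    intro a b
    rw [Ring.lie_def]
    simp only [LinearMap.sub_apply, Module.End.mul_apply]
    rw [hg a b, map_add, hf a (g b), hf (g a) b, hf a b, map_add, hg a (f b), hg (f a) b,
      mul_sub, sub_mul]
    abel

/-- The inner derivations form a Lie ideal `IDer(A)` of `Der(A)`. -/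
def IDer : LieIdeal k (Der k A) where
  carrier := {f | IsInner k A f.1}
  add_mem' := by
    rintro f g ⟨c, hc⟩ ⟨d, hd⟩
    refine ⟨c + d, fun a => ?_⟩
    show f.1 a + g.1 a = _
    rw [hc, hd]
    noncomm_ring
  zero_mem' := ⟨0, fun a => by simp⟩
  smul_mem' := by
    rintro t f ⟨c, hc⟩
    refine ⟨t • c, fun a => ?_⟩
    show t • f.1 a = _
    rw [hc, smul_sub, smul_mul_assoc, mul_smul_comm]
  lie_mem := by
    rintro x m ⟨c, hc⟩
    refine ⟨x.1 c, fun a => ?_⟩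
    have hx : IsDeriv k A x.1 := x.2
    have h : (↑(⁅x, m⁆ : Der k A) : Module.End k A) a = x.1 (m.1 a) - m.1 (x.1 a) := rfl
    rw [h, hc, hc, map_sub, hx c a, hx a c]
    abel

/-- The first Hochschild cohomology `HH¹(A) = Der(A)/IDer(A)`, as a quotient Lie algebra. -/
abbrev HH1 := Der k A ⧸ IDer k A

end HochschildPrelim

namespace QCIAux

variable {k : Type*} [Field k] {A : Type*} [Ring A] [Algebra k A]

def dpow (a u : A) (n : ℕ) : A := ∑ s ∈ Finset.range n, a ^ s * u * a ^ (n - 1 - s)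

@[simp] lemma dpow_zero (a u : A) : dpow a u 0 = 0 := by simp [dpow]

@[simp] lemma dpow_zero_dir (a : A) (n : ℕ) : dpow a 0 n = 0 := by simp [dpow]

lemma dpow_succ (a u : A) (n : ℕ) :
    dpow a u (n + 1) = a * dpow a u n + u * a ^ n := by
  rw [dpow, Finset.sum_range_succ']
  simp only [Nat.add_sub_cancel, Nat.sub_zero, pow_zero, mul_one, one_mul]
  rw [dpow, Finset.mul_sum]
  congr 1
  refine Finset.sum_congr rfl fun s hs => ?_
  have hs' : s < n := Finset.mem_range.mp hs
  have h1 : n - (s + 1) = n - 1 - s := by omega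
  rw [h1, pow_succ']
  noncomm_ring

lemma dpow_succ' (a u : A) (n : ℕ) :
    dpow a u (n + 1) = dpow a u n * a + a ^ n * u := by
  rw [dpow, Finset.sum_range_succ]
  simp only [Nat.add_sub_cancel, Nat.sub_self, pow_zero, mul_one]
  rw [dpow, Finset.sum_mul]
  congr 1
  refine Finset.sum_congr rfl fun s hs => ?_
  have hs' : s < n := Finset.mem_range.mp hs
  have h1 : n - s = n - 1 - s + 1 := by omega
  rw [h1, pow_succ, ← mul_assoc]

lemma dpow_add (a u : A) (m n : ℕ) :
    dpow a u (m + n) = a ^ m * dpow a u n + dpow a u m * a ^ n := by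
  induction m with
  | zero => simp
  | succ m ih =>
      have h : m + 1 + n = (m + n) + 1 := by omega
      rw [h, dpow_succ, ih, dpow_succ, pow_succ', pow_add]
      noncomm_ring

lemma dpow_vanish (a u : A) {P : ℕ} (hp : dpow a u P = 0) (ha : a ^ P = 0)
    {n : ℕ} (hn : P ≤ n) : dpow a u n = 0 := by
  obtain ⟨m, rfl⟩ := Nat.exists_eq_add_of_le hn
  rw [Nat.add_comm, dpow_add, hp, ha]
  simp

lemma isDeriv_map_one {f : Module.End k A} (hf : IsDeriv k A f) : f 1 = 0 := by
  have := hf 1 1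
  simpa using this

lemma isDeriv_pow {f : Module.End k A} (hf : IsDeriv k A f) (a : A) (n : ℕ) :
    f (a ^ n) = dpow a (f a) n := by
  induction n with
  | zero => simpa [pow_zero] using isDeriv_map_one hf
  | succ n ih => rw [pow_succ', hf a (a ^ n), ih, dpow_succ]

lemma pow_ge {x : A} {p : ℕ} (hx : x ^ p = 0) {i : ℕ} (h : p ≤ i) : x ^ i = 0 := by
  have : x ^ i = x ^ p * x ^ (i - p) := by rw [← pow_add, Nat.add_sub_cancel' h]
  rw [this, hx, zero_mul]

lemma ycomm {q : k} {x y : A} (hyx : y * x = q • (x * y)) (i : ℕ) :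
    y * x ^ i = q ^ i • (x ^ i * y) := by
  induction i with
  | zero => simp
  | succ i ih =>
      rw [pow_succ, ← mul_assoc, ih, smul_mul_assoc, mul_assoc, hyx, mul_smul_comm,
        smul_smul, ← pow_succ, pow_succ, mul_assoc]

lemma yjcomm {q : k} {x y : A} (hyx : y * x = q • (x * y)) (i j : ℕ) :
    y ^ j * x ^ i = q ^ (i * j) • (x ^ i * y ^ j) := by
  induction j with
  | zero => simp
  | succ j ih =>
      rw [pow_succ', mul_assoc, ih, mul_smul_comm, ← mul_assoc, ycomm hyx,
        smul_mul_assoc, smul_smul, ← pow_add, mul_assoc, ← pow_succ']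
      ring_nf

lemma Mmul {q : k} {x y : A} (hyx : y * x = q • (x * y)) (i j l m : ℕ) :
    (x ^ i * y ^ j) * (x ^ l * y ^ m) = q ^ (j * l) • (x ^ (i + l) * y ^ (j + m)) := by
  calc (x ^ i * y ^ j) * (x ^ l * y ^ m) = x ^ i * (y ^ j * x ^ l) * y ^ m := by
        noncomm_ring
    _ = q ^ (l * j) • (x ^ i * (x ^ l * y ^ j) * y ^ m) := by
        rw [yjcomm hyx, mul_smul_comm, smul_mul_assoc]
    _ = q ^ (j * l) • (x ^ (i + l) * y ^ (j + m)) := by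
        rw [Nat.mul_comm l j, pow_add, pow_add]
        noncomm_ring

section Main

variable {p : ℕ} {q : k} {x y : A}

lemma repr_M (b : Module.Basis (Fin p × Fin p) k A)
    (hb : ∀ ij : Fin p × Fin p, b ij = x ^ (ij.1 : ℕ) * y ^ (ij.2 : ℕ))
    (hx : x ^ p = 0) (hy : y ^ p = 0) (i j : ℕ) (mn : Fin p × Fin p) :
    b.repr (x ^ i * y ^ j) mn = if (i = (mn.1 : ℕ) ∧ j = (mn.2 : ℕ)) then 1 else 0 := by
  by_cases hi : i < p
  · by_cases hj : j < p
    · have hM : x ^ i * y ^ j = b (⟨i, hi⟩, ⟨j, hj⟩) := by rw [hb]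
      have hcond : (((⟨i, hi⟩, ⟨j, hj⟩) : Fin p × Fin p) = mn) ↔ (i = (mn.1 : ℕ) ∧ j = (mn.2 : ℕ)) := by
        simp [Prod.ext_iff, Fin.ext_iff]
      rw [hM, b.repr_self, Finsupp.single_apply, if_congr hcond rfl rfl]
    · have : y ^ j = 0 := pow_ge hy (le_of_not_gt hj)
      rw [this, mul_zero, map_zero, Finsupp.zero_apply, if_neg]
      rintro ⟨-, h2⟩
      exact hj (h2 ▸ mn.2.isLt)
  · have : x ^ i = 0 := pow_ge hx (le_of_not_gt hi)
    rw [this, zero_mul, map_zero, Finsupp.zero_apply, if_neg]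
    rintro ⟨h1, -⟩
    exact hi (h1 ▸ mn.1.isLt)

theorem extension
    (hx : x ^ p = 0) (hy : y ^ p = 0) (hyx : y * x = q • (x * y))
    (b : Module.Basis (Fin p × Fin p) k A)
    (hb : ∀ ij : Fin p × Fin p, b ij = x ^ (ij.1 : ℕ) * y ^ (ij.2 : ℕ))
    (u v : A)
    (hR1 : dpow x u p = 0) (hR2 : dpow y v p = 0)
    (hR3 : v * x + y * u = q • (u * y) + q • (x * v)) :
    ∃ f : Module.End k A, IsDeriv k A f ∧ f x = u ∧ f y = v := by
  have hyu : y * u = q • (u * y) + q • (x * v) - v * x := eq_sub_of_add_eq' hR3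
  -- Claim C
  have claimC : ∀ n : ℕ, y * dpow x u n + v * x ^ n
      = q ^ n • (dpow x u n * y) + q ^ n • (x ^ n * v) := by
    intro n
    induction n with
    | zero => simp
    | succ n ih =>
        have ih' : y * dpow x u n
            = q ^ n • (dpow x u n * y) + q ^ n • (x ^ n * v) - v * x ^ n :=
          eq_sub_of_add_eq ih
        calc y * dpow x u (n + 1) + v * x ^ (n + 1)
            = (y * x) * dpow x u n + (y * u) * x ^ n + v * (x * x ^ n) := by
              rw [dpow_succ, pow_succ']; noncomm_ring
          _ = (q • (x * y)) * dpow x u n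
              + (q • (u * y) + q • (x * v) - v * x) * x ^ n + v * (x * x ^ n) := by
              rw [hyx, hyu]
          _ = q • (x * (y * dpow x u n)) + q • (u * (y * x ^ n)) + q • (x * (v * x ^ n)) := by
              simp only [smul_mul_assoc, add_mul, sub_mul, mul_assoc]
              abel
          _ = q • (x * (q ^ n • (dpow x u n * y) + q ^ n • (x ^ n * v) - v * x ^ n))
              + q • (u * (q ^ n • (x ^ n * y))) + q • (x * (v * x ^ n)) := by
              rw [ih', ycomm hyx]
          _ = q ^ (n + 1) • (dpow x u (n + 1) * y) + q ^ (n + 1) • (x ^ (n + 1) * v) := by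
              rw [dpow_succ, pow_succ']
              simp only [smul_add, smul_sub, mul_add, mul_sub, add_mul,
                mul_smul_comm, smul_mul_assoc, smul_smul, mul_assoc, pow_succ']
              module
  -- the candidate map
  set g : Fin p × Fin p → A := fun ij =>
    dpow x u (ij.1 : ℕ) * y ^ (ij.2 : ℕ) + x ^ (ij.1 : ℕ) * dpow y v (ij.2 : ℕ) with hg
  set f : Module.End k A := b.constr k g with hf
  have star : ∀ i j : ℕ,
      f (x ^ i * y ^ j) = dpow x u i * y ^ j + x ^ i * dpow y v j := by
    intro i j
    by_cases hi : i < p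
    · by_cases hj : j < p
      · have hM : x ^ i * y ^ j = b (⟨i, hi⟩, ⟨j, hj⟩) := by rw [hb]
        rw [hM, hf, b.constr_basis]
      · have h1 : y ^ j = 0 := pow_ge hy (le_of_not_gt hj)
        have h2 : dpow y v j = 0 := dpow_vanish y v hR2 hy (le_of_not_gt hj)
        rw [h1, h2]
        simp
    · have h1 : x ^ i = 0 := pow_ge hx (le_of_not_gt hi)
      have h2 : dpow x u i = 0 := dpow_vanish x u hR1 hx (le_of_not_gt hi)
      rw [h1, h2]
      simp
  -- Leibniz against x on the left
  have Hx : ∀ c : A, f (x * c) = x * f c + u * c := by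
    have : f ∘ₗ LinearMap.mulLeft k x
        = LinearMap.mulLeft k x ∘ₗ f + LinearMap.mulLeft k u := by
      refine Module.Basis.ext b fun ij => ?_
      obtain ⟨i, j⟩ := ij
      simp only [LinearMap.comp_apply, LinearMap.add_apply, LinearMap.mulLeft_apply]
      rw [hb]
      simp only
      have hxc : x * (x ^ (i : ℕ) * y ^ (j : ℕ)) = x ^ ((i : ℕ) + 1) * y ^ (j : ℕ) := by
        rw [pow_succ']; noncomm_ring
      rw [hxc, star, star, dpow_succ, pow_succ']
      noncomm_ring
    intro c
    have := LinearMap.congr_fun this c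
    simpa using this
  -- Leibniz against y on the left
  have Hy : ∀ c : A, f (y * c) = y * f c + v * c := by
    have : f ∘ₗ LinearMap.mulLeft k y
        = LinearMap.mulLeft k y ∘ₗ f + LinearMap.mulLeft k v := by
      refine Module.Basis.ext b fun ij => ?_
      obtain ⟨i, j⟩ := ij
      simp only [LinearMap.comp_apply, LinearMap.add_apply, LinearMap.mulLeft_apply]
      rw [hb]
      simp only
      have hyc : y * (x ^ (i : ℕ) * y ^ (j : ℕ))
          = q ^ (i : ℕ) • (x ^ (i : ℕ) * y ^ ((j : ℕ) + 1)) := by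
        rw [← mul_assoc, ycomm hyx, smul_mul_assoc, mul_assoc, ← pow_succ']
      have hC := eq_sub_of_add_eq (claimC (i : ℕ))
      rw [hyc, map_smul, star, star, dpow_succ]
      conv_rhs => rw [mul_add, ← mul_assoc, ← mul_assoc]
      rw [hC, ycomm hyx]
      simp only [smul_add, smul_sub, mul_add, mul_sub, add_mul, sub_mul,
        mul_smul_comm, smul_mul_assoc, smul_smul, mul_assoc, pow_succ']
      module
    intro c
    have := LinearMap.congr_fun this c
    simpa using this
  -- full Leibniz
  have Hyl : ∀ (l : ℕ) (c : A), f (y ^ l * c) = y ^ l * f c + dpow y v l * c := by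
    intro l
    induction l with
    | zero => intro c; simp
    | succ l ih =>
        intro c
        have h1 : y ^ (l + 1) * c = y * (y ^ l * c) := by rw [pow_succ']; noncomm_ring
        rw [h1, Hy, ih, dpow_succ, pow_succ']
        noncomm_ring
  have Hbas : ∀ (i l : ℕ) (c : A), f ((x ^ i * y ^ l) * c)
      = (x ^ i * y ^ l) * f c + (dpow x u i * y ^ l + x ^ i * dpow y v l) * c := by
    intro i
    induction i with
    | zero =>
        intro l c
        simp only [pow_zero, one_mul, dpow_zero, zero_mul, add_zero, zero_add]
        exact Hyl l c
    | succ i ih =>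
        intro l c
        have h1 : (x ^ (i + 1) * y ^ l) * c = x * ((x ^ i * y ^ l) * c) := by
          rw [pow_succ']; noncomm_ring
        rw [h1, Hx, ih, dpow_succ, pow_succ']
        noncomm_ring
  have hder : IsDeriv k A f := by
    intro a c
    have : f ∘ₗ LinearMap.mulRight k c
        = LinearMap.mulRight k (f c) + LinearMap.mulRight k c ∘ₗ f := by
      refine Module.Basis.ext b fun ij => ?_
      obtain ⟨i, j⟩ := ij
      simp only [LinearMap.comp_apply, LinearMap.add_apply, LinearMap.mulRight_apply]
      rw [hb]
      simp only
      rw [Hbas, star]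
    have := LinearMap.congr_fun this a
    simpa using this
  refine ⟨f, hder, ?_, ?_⟩
  · have := star 1 0
    simpa [dpow_succ] using this
  · have := star 0 1
    simpa [dpow_succ] using this

-- monomial images of the relation map
lemma lemA (hyx : y * x = q • (x * y)) (i j : ℕ) :
    y * (x ^ i * y ^ j) - q • ((x ^ i * y ^ j) * y)
      = (q ^ i - q) • (x ^ i * y ^ (j + 1)) := by
  have h1 : y * (x ^ i * y ^ j) = q ^ i • (x ^ i * y ^ (j + 1)) := by
    rw [← mul_assoc, ycomm hyx, smul_mul_assoc, mul_assoc, ← pow_succ']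
  have h2 : (x ^ i * y ^ j) * y = x ^ i * y ^ (j + 1) := by
    rw [mul_assoc, ← pow_succ]
  rw [h1, h2, sub_smul]

lemma lemB (hyx : y * x = q • (x * y)) (i j : ℕ) :
    (x ^ i * y ^ j) * x - q • (x * (x ^ i * y ^ j))
      = (q ^ j - q) • (x ^ (i + 1) * y ^ j) := by
  have h1 : (x ^ i * y ^ j) * x = q ^ j • (x ^ (i + 1) * y ^ j) := by
    have := yjcomm hyx 1 j
    rw [pow_one] at this
    rw [mul_assoc, this, mul_smul_comm, ← mul_assoc, ← pow_succ]
    ring_nf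
  have h2 : x * (x ^ i * y ^ j) = x ^ (i + 1) * y ^ j := by
    rw [← mul_assoc, ← pow_succ']
  rw [h1, h2, sub_smul]

lemma expandL3 (hyx : y * x = q • (x * y))
    (b : Module.Basis (Fin p × Fin p) k A)
    (hb : ∀ ij : Fin p × Fin p, b ij = x ^ (ij.1 : ℕ) * y ^ (ij.2 : ℕ))
    (u v : A) :
    v * x + y * u - q • (u * y) - q • (x * v)
      = ∑ ij : Fin p × Fin p,
          ((b.repr u ij * (q ^ (ij.1 : ℕ) - q)) • (x ^ (ij.1 : ℕ) * y ^ ((ij.2 : ℕ) + 1))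
           + (b.repr v ij * (q ^ (ij.2 : ℕ) - q)) • (x ^ ((ij.1 : ℕ) + 1) * y ^ (ij.2 : ℕ))) := by
  have hyU : y * u - q • (u * y)
      = ∑ ij : Fin p × Fin p,
          (b.repr u ij * (q ^ (ij.1 : ℕ) - q)) • (x ^ (ij.1 : ℕ) * y ^ ((ij.2 : ℕ) + 1)) := by
    conv_lhs => rw [← b.sum_repr u]
    rw [Finset.mul_sum, Finset.sum_mul, Finset.smul_sum, ← Finset.sum_sub_distrib]
    refine Finset.sum_congr rfl fun ij _ => ?_
    rw [hb]
    calc y * (b.repr u ij • (x ^ (ij.1 : ℕ) * y ^ (ij.2 : ℕ)))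
          - q • ((b.repr u ij • (x ^ (ij.1 : ℕ) * y ^ (ij.2 : ℕ))) * y)
        = b.repr u ij • (y * (x ^ (ij.1 : ℕ) * y ^ (ij.2 : ℕ))
            - q • ((x ^ (ij.1 : ℕ) * y ^ (ij.2 : ℕ)) * y)) := by
          rw [mul_smul_comm, smul_mul_assoc, smul_comm q (b.repr u ij), smul_sub]
      _ = b.repr u ij • ((q ^ (ij.1 : ℕ) - q) • (x ^ (ij.1 : ℕ) * y ^ ((ij.2 : ℕ) + 1))) := by
          rw [lemA hyx]
      _ = (b.repr u ij * (q ^ (ij.1 : ℕ) - q)) • (x ^ (ij.1 : ℕ) * y ^ ((ij.2 : ℕ) + 1)) := by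
          rw [smul_smul]
  have hxV : v * x - q • (x * v)
      = ∑ ij : Fin p × Fin p,
          (b.repr v ij * (q ^ (ij.2 : ℕ) - q)) • (x ^ ((ij.1 : ℕ) + 1) * y ^ (ij.2 : ℕ)) := by
    conv_lhs => rw [← b.sum_repr v]
    rw [Finset.sum_mul, Finset.mul_sum, Finset.smul_sum, ← Finset.sum_sub_distrib]
    refine Finset.sum_congr rfl fun ij _ => ?_
    rw [hb]
    calc (b.repr v ij • (x ^ (ij.1 : ℕ) * y ^ (ij.2 : ℕ))) * x
          - q • (x * (b.repr v ij • (x ^ (ij.1 : ℕ) * y ^ (ij.2 : ℕ))))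
        = b.repr v ij • ((x ^ (ij.1 : ℕ) * y ^ (ij.2 : ℕ)) * x
            - q • (x * (x ^ (ij.1 : ℕ) * y ^ (ij.2 : ℕ)))) := by
          rw [mul_smul_comm, smul_mul_assoc, smul_comm q (b.repr v ij), smul_sub]
      _ = b.repr v ij • ((q ^ (ij.2 : ℕ) - q) • (x ^ ((ij.1 : ℕ) + 1) * y ^ (ij.2 : ℕ))) := by
          rw [lemB hyx]
      _ = (b.repr v ij * (q ^ (ij.2 : ℕ) - q)) • (x ^ ((ij.1 : ℕ) + 1) * y ^ (ij.2 : ℕ)) := by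
          rw [smul_smul]
  calc v * x + y * u - q • (u * y) - q • (x * v)
      = (y * u - q • (u * y)) + (v * x - q • (x * v)) := by abel
    _ = _ := by rw [hyU, hxV, ← Finset.sum_add_distrib]
lemma coeff_u_zero (hp : 0 < p)
    (hx : x ^ p = 0) (hy : y ^ p = 0) (hyx : y * x = q • (x * y))
    (b : Module.Basis (Fin p × Fin p) k A)
    (hb : ∀ ij : Fin p × Fin p, b ij = x ^ (ij.1 : ℕ) * y ^ (ij.2 : ℕ))
    (u v : A) (hq1 : q ≠ 1)
    (hker : v * x + y * u - q • (u * y) - q • (x * v) = 0)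
    (j : ℕ) (hj : j + 1 < p) :
    b.repr u (⟨0, hp⟩, ⟨j, by omega⟩) = 0 := by
  have hEq := (expandL3 hyx b hb u v).symm.trans hker
  set m0 : Fin p × Fin p := (⟨0, hp⟩, ⟨j + 1, hj⟩) with hm0
  have h0 := congrArg (fun w => b.repr w m0) hEq
  simp only [map_zero, map_sum, map_add, map_smul, Finsupp.coe_zero, Pi.zero_apply,
    Finset.sum_apply', Finsupp.add_apply, Finsupp.smul_apply, smul_eq_mul,
    Finsupp.coe_add, Pi.add_apply] at h0
  rw [Finset.sum_congr rfl (fun ij _ => by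
      rw [repr_M b hb hx hy (ij.1 : ℕ) ((ij.2 : ℕ) + 1) m0,
        repr_M b hb hx hy ((ij.1 : ℕ) + 1) (ij.2 : ℕ) m0])] at h0
  have hm1 : ((m0.1 : Fin p) : ℕ) = 0 := rfl
  have hm2 : ((m0.2 : Fin p) : ℕ) = j + 1 := rfl
  rw [Finset.sum_eq_single ((⟨0, hp⟩ : Fin p), (⟨j, by omega⟩ : Fin p))] at h0
  · simp only [hm1, hm2] at h0
    simp only [Nat.succ_ne_zero, false_and, if_false, and_self, if_true, pow_zero,
      mul_zero, add_zero, mul_one] at h0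
    have : (1 : k) - q ≠ 0 := sub_ne_zero.mpr (fun h => hq1 h.symm)
    have h0' : b.repr u (⟨0, hp⟩, ⟨j, by omega⟩) * (1 - q) = 0 := h0
    exact (mul_eq_zero.mp h0').resolve_right this
  · intro ij _ hne
    simp only [hm1, hm2, Nat.succ_ne_zero, false_and, if_false, mul_zero, add_zero]
    rw [if_neg, mul_zero]
    rintro ⟨h1, h2⟩
    apply hne
    have : (ij.1 : ℕ) = 0 ∧ (ij.2 : ℕ) = j := by omega
    ext
    · exact this.1
    · exact this.2
  · intro h
    exact absurd (Finset.mem_univ _) h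
lemma coeff_v_zero (hp : 0 < p)
    (hx : x ^ p = 0) (hy : y ^ p = 0) (hyx : y * x = q • (x * y))
    (b : Module.Basis (Fin p × Fin p) k A)
    (hb : ∀ ij : Fin p × Fin p, b ij = x ^ (ij.1 : ℕ) * y ^ (ij.2 : ℕ))
    (u v : A) (hq1 : q ≠ 1)
    (hker : v * x + y * u - q • (u * y) - q • (x * v) = 0)
    (i : ℕ) (hi : i + 1 < p) :
    b.repr v (⟨i, by omega⟩, ⟨0, hp⟩) = 0 := by
  have hEq := (expandL3 hyx b hb u v).symm.trans hker
  set m0 : Fin p × Fin p := (⟨i + 1, hi⟩, ⟨0, hp⟩) with hm0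
  have h0 := congrArg (fun w => b.repr w m0) hEq
  simp only [map_zero, map_sum, map_add, map_smul, Finsupp.coe_zero, Pi.zero_apply,
    Finset.sum_apply', Finsupp.add_apply, Finsupp.smul_apply, smul_eq_mul,
    Finsupp.coe_add, Pi.add_apply] at h0
  rw [Finset.sum_congr rfl (fun ij _ => by
      rw [repr_M b hb hx hy (ij.1 : ℕ) ((ij.2 : ℕ) + 1) m0,
        repr_M b hb hx hy ((ij.1 : ℕ) + 1) (ij.2 : ℕ) m0])] at h0
  have hm1 : ((m0.1 : Fin p) : ℕ) = i + 1 := rfl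
  have hm2 : ((m0.2 : Fin p) : ℕ) = 0 := rfl
  rw [Finset.sum_eq_single ((⟨i, by omega⟩ : Fin p), (⟨0, hp⟩ : Fin p))] at h0
  · simp only [hm1, hm2] at h0
    simp only [Nat.succ_ne_zero, and_false, if_false, and_self, if_true, pow_zero,
      zero_mul, mul_zero, zero_add, add_zero, mul_one] at h0
    have : (1 : k) - q ≠ 0 := sub_ne_zero.mpr (fun h => hq1 h.symm)
    have h0' : b.repr v (⟨i, by omega⟩, ⟨0, hp⟩) * (1 - q) = 0 := h0
    exact (mul_eq_zero.mp h0').resolve_right this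
  · intro ij _ hne
    simp only [hm1, hm2, Nat.succ_ne_zero, and_false, if_false, mul_zero, zero_add]
    rw [if_neg, mul_zero]
    rintro ⟨h1, h2⟩
    apply hne
    have : (ij.1 : ℕ) = i ∧ (ij.2 : ℕ) = 0 := by omega
    ext
    · exact this.1
    · exact this.2
  · intro h
    exact absurd (Finset.mem_univ _) h
/-- `dpow a · n` as a linear map. -/
noncomputable def dpowL (a : A) (n : ℕ) : A →ₗ[k] A :=
  ∑ s ∈ Finset.range n,
    (LinearMap.mulRight k (a ^ (n - 1 - s))).comp (LinearMap.mulLeft k (a ^ s))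

lemma dpowL_apply (a u : A) (n : ℕ) : dpowL (k := k) a n u = dpow a u n := by
  simp [dpowL, dpow, LinearMap.sum_apply, mul_assoc]

lemma dpow_x_M (hyx : y * x = q • (x * y)) (i j n : ℕ) :
    dpow x (x ^ i * y ^ j) n
      = (∑ s ∈ Finset.range n, q ^ (j * (n - 1 - s))) • (x ^ (i + n - 1) * y ^ j) := by
  rw [dpow, Finset.sum_smul]
  refine Finset.sum_congr rfl fun s hs => ?_
  have hs' : s < n := Finset.mem_range.mp hs
  calc x ^ s * (x ^ i * y ^ j) * x ^ (n - 1 - s)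
      = x ^ (s + i) * (y ^ j * x ^ (n - 1 - s)) := by rw [pow_add]; noncomm_ring
    _ = q ^ ((n - 1 - s) * j) • (x ^ (s + i) * (x ^ (n - 1 - s) * y ^ j)) := by
        rw [yjcomm hyx, mul_smul_comm]
    _ = q ^ (j * (n - 1 - s)) • (x ^ (i + n - 1) * y ^ j) := by
        rw [← mul_assoc, ← pow_add, Nat.mul_comm]
        congr 3
        omega

lemma dpow_y_M (hyx : y * x = q • (x * y)) (i j n : ℕ) :
    dpow y (x ^ i * y ^ j) n
      = (∑ s ∈ Finset.range n, q ^ (i * s)) • (x ^ i * y ^ (j + n - 1)) := by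
  rw [dpow, Finset.sum_smul]
  refine Finset.sum_congr rfl fun s hs => ?_
  have hs' : s < n := Finset.mem_range.mp hs
  calc y ^ s * (x ^ i * y ^ j) * y ^ (n - 1 - s)
      = (y ^ s * x ^ i) * (y ^ j * y ^ (n - 1 - s)) := by noncomm_ring
    _ = q ^ (i * s) • (x ^ i * y ^ s * (y ^ j * y ^ (n - 1 - s))) := by
        rw [yjcomm hyx, smul_mul_assoc]
    _ = q ^ (i * s) • (x ^ i * y ^ (j + n - 1)) := by
        rw [← pow_add, mul_assoc, ← pow_add]
        congr 3
        omega

lemma R1_of (hp : 0 < p)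
    (hx : x ^ p = 0) (hy : y ^ p = 0) (hyx : y * x = q • (x * y))
    (b : Module.Basis (Fin p × Fin p) k A)
    (hb : ∀ ij : Fin p × Fin p, b ij = x ^ (ij.1 : ℕ) * y ^ (ij.2 : ℕ))
    (u : A)
    (hcoef : ∀ (j : ℕ) (hj : j + 1 < p), b.repr u (⟨0, hp⟩, ⟨j, by omega⟩) = 0)
    (hq' : q ^ (p - 1) = 1) (hpk : (p : k) = 0) :
    dpow x u p = 0 := by
  rw [← dpowL_apply (k := k)]
  conv_lhs => rw [← b.sum_repr u]
  rw [map_sum]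
  refine Finset.sum_eq_zero fun ij _ => ?_
  rw [map_smul, dpowL_apply, hb, dpow_x_M hyx]
  by_cases hi : (ij.1 : ℕ) = 0
  · by_cases hj : (ij.2 : ℕ) + 1 < p
    · have : b.repr u ij = 0 := by
        have hij : ij = ((⟨0, hp⟩ : Fin p), (⟨(ij.2 : ℕ), by omega⟩ : Fin p)) := by
          ext
          · exact hi
          · rfl
        rw [hij]
        exact hcoef (ij.2 : ℕ) hj
      rw [this, zero_smul]
    · -- j = p - 1
      have hj' : (ij.2 : ℕ) = p - 1 := by have := ij.2.isLt; omega
      have hsum : (∑ s ∈ Finset.range p, q ^ ((ij.2 : ℕ) * (p - 1 - s))) = 0 := by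
        have : ∀ s ∈ Finset.range p, q ^ ((ij.2 : ℕ) * (p - 1 - s)) = 1 := by
          intro s _
          rw [hj', pow_mul, hq', one_pow]
        rw [Finset.sum_congr rfl this, Finset.sum_const, Finset.card_range,
          nsmul_eq_mul, mul_one, hpk]
      rw [hsum, zero_smul, smul_zero]
  · have : x ^ ((ij.1 : ℕ) + p - 1) = 0 := pow_ge hx (by omega)
    rw [this, zero_mul, smul_zero, smul_zero]

lemma R2_of (hp : 0 < p)
    (hx : x ^ p = 0) (hy : y ^ p = 0) (hyx : y * x = q • (x * y))
    (b : Module.Basis (Fin p × Fin p) k A)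
    (hb : ∀ ij : Fin p × Fin p, b ij = x ^ (ij.1 : ℕ) * y ^ (ij.2 : ℕ))
    (v : A)
    (hcoef : ∀ (i : ℕ) (hi : i + 1 < p), b.repr v (⟨i, by omega⟩, ⟨0, hp⟩) = 0)
    (hq' : q ^ (p - 1) = 1) (hpk : (p : k) = 0) :
    dpow y v p = 0 := by
  rw [← dpowL_apply (k := k)]
  conv_lhs => rw [← b.sum_repr v]
  rw [map_sum]
  refine Finset.sum_eq_zero fun ij _ => ?_
  rw [map_smul, dpowL_apply, hb, dpow_y_M hyx]
  by_cases hj : (ij.2 : ℕ) = 0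
  · by_cases hi : (ij.1 : ℕ) + 1 < p
    · have : b.repr v ij = 0 := by
        have hij : ij = ((⟨(ij.1 : ℕ), by omega⟩ : Fin p), (⟨0, hp⟩ : Fin p)) := by
          ext
          · rfl
          · exact hj
        rw [hij]
        exact hcoef (ij.1 : ℕ) hi
      rw [this, zero_smul]
    · have hi' : (ij.1 : ℕ) = p - 1 := by have := ij.1.isLt; omega
      have hsum : (∑ s ∈ Finset.range p, q ^ ((ij.1 : ℕ) * s)) = 0 := by
        have hdvd : ∀ s ∈ Finset.range p, q ^ ((ij.1 : ℕ) * s) = 1 := by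
          intro s _
          rw [hi', pow_mul, hq', one_pow]
        rw [Finset.sum_congr rfl hdvd, Finset.sum_const, Finset.card_range,
          nsmul_eq_mul, mul_one, hpk]
      rw [hsum, zero_smul, smul_zero]
  · have : y ^ ((ij.2 : ℕ) + p - 1) = 0 := pow_ge hy (by omega)
    rw [this, mul_zero, smul_zero, smul_zero]
/-- The linear map cutting out the relation `R3`. -/
noncomputable def L3map (q : k) (x y : A) : A × A →ₗ[k] A :=
  (LinearMap.mulRight k x).comp (LinearMap.snd k A A)
  + (LinearMap.mulLeft k y).comp (LinearMap.fst k A A)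
  - q • ((LinearMap.mulRight k y).comp (LinearMap.fst k A A))
  - q • ((LinearMap.mulLeft k x).comp (LinearMap.snd k A A))

lemma L3map_apply (u v : A) :
    L3map q x y (u, v) = v * x + y * u - q • (u * y) - q • (x * v) := by
  simp [L3map]

lemma L3_inl (hyx : y * x = q • (x * y)) (i j : ℕ) :
    L3map q x y (x ^ i * y ^ j, 0) = (q ^ i - q) • (x ^ i * y ^ (j + 1)) := by
  rw [L3map_apply]
  simp only [zero_mul, mul_zero, smul_zero, add_zero, sub_zero, zero_add]
  exact lemA hyx i j

lemma L3_inr (hyx : y * x = q • (x * y)) (i j : ℕ) :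
    L3map q x y (0, x ^ i * y ^ j) = (q ^ j - q) • (x ^ (i + 1) * y ^ j) := by
  rw [L3map_apply]
  simp only [zero_mul, mul_zero, smul_zero, add_zero, sub_zero, zero_add]
  exact lemB hyx i j

/-- index set of basis monomials hit by `L3map` -/
def Tset (q : k) (p : ℕ) : Set (Fin p × Fin p) :=
  {mn | (1 ≤ (mn.2 : ℕ) ∧ q ^ (mn.1 : ℕ) ≠ q) ∨ (1 ≤ (mn.1 : ℕ) ∧ q ^ (mn.2 : ℕ) ≠ q)}

lemma range_L3 (hx : x ^ p = 0) (hy : y ^ p = 0) (hyx : y * x = q • (x * y))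
    (b : Module.Basis (Fin p × Fin p) k A)
    (hb : ∀ ij : Fin p × Fin p, b ij = x ^ (ij.1 : ℕ) * y ^ (ij.2 : ℕ)) :
    LinearMap.range (L3map q x y) = Submodule.span k (⇑b '' Tset q p) := by
  apply le_antisymm
  · rw [LinearMap.range_eq_map, ← (b.prod b).span_eq, Submodule.map_span]
    refine Submodule.span_le.mpr ?_
    rintro z ⟨w, ⟨idx, rfl⟩, rfl⟩
    cases idx with
    | inl ij =>
        have hw : (b.prod b) (Sum.inl ij) = (b ij, 0) := by
          ext
          · simp
          · simp
        rw [hw, hb, L3_inl hyx]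
        by_cases hqi : q ^ (ij.1 : ℕ) = q
        · rw [hqi, sub_self, zero_smul]
          exact Submodule.zero_mem _
        · by_cases hjp : (ij.2 : ℕ) + 1 < p
          · have hM : x ^ (ij.1 : ℕ) * y ^ ((ij.2 : ℕ) + 1)
                = b (ij.1, ⟨(ij.2 : ℕ) + 1, hjp⟩) := by rw [hb]
            rw [hM]
            refine Submodule.smul_mem _ _ (Submodule.subset_span ?_)
            exact ⟨(ij.1, ⟨(ij.2 : ℕ) + 1, hjp⟩), Or.inl ⟨by simp, hqi⟩, rfl⟩
          · have : y ^ ((ij.2 : ℕ) + 1) = 0 := pow_ge hy (by omega)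
            rw [this, mul_zero, smul_zero]
            exact Submodule.zero_mem _
    | inr ij =>
        have hw : (b.prod b) (Sum.inr ij) = (0, b ij) := by
          ext
          · simp
          · simp
        rw [hw, hb, L3_inr hyx]
        by_cases hqj : q ^ (ij.2 : ℕ) = q
        · rw [hqj, sub_self, zero_smul]
          exact Submodule.zero_mem _
        · by_cases hip : (ij.1 : ℕ) + 1 < p
          · have hM : x ^ ((ij.1 : ℕ) + 1) * y ^ (ij.2 : ℕ)
                = b (⟨(ij.1 : ℕ) + 1, hip⟩, ij.2) := by rw [hb]
            rw [hM]
            refine Submodule.smul_mem _ _ (Submodule.subset_span ?_)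
            exact ⟨(⟨(ij.1 : ℕ) + 1, hip⟩, ij.2), Or.inr ⟨by simp, hqj⟩, rfl⟩
          · have : x ^ ((ij.1 : ℕ) + 1) = 0 := pow_ge hx (by omega)
            rw [this, zero_mul, smul_zero]
            exact Submodule.zero_mem _
  · refine Submodule.span_le.mpr ?_
    rintro z ⟨mn, hmn, rfl⟩
    rcases hmn with ⟨hn, hqm⟩ | ⟨hm, hqn⟩
    · have hsub : q ^ (mn.1 : ℕ) - q ≠ 0 := sub_ne_zero.mpr hqm
      have hz : (q ^ (mn.1 : ℕ) - q) • (b mn) ∈ LinearMap.range (L3map q x y) := by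
        refine ⟨(x ^ (mn.1 : ℕ) * y ^ ((mn.2 : ℕ) - 1), 0), ?_⟩
        rw [L3_inl hyx]
        have : (mn.2 : ℕ) - 1 + 1 = (mn.2 : ℕ) := by omega
        rw [this, hb]
      have := Submodule.smul_mem (LinearMap.range (L3map q x y)) (q ^ (mn.1 : ℕ) - q)⁻¹ hz
      rwa [inv_smul_smul₀ hsub] at this
    · have hsub : q ^ (mn.2 : ℕ) - q ≠ 0 := sub_ne_zero.mpr hqn
      have hz : (q ^ (mn.2 : ℕ) - q) • (b mn) ∈ LinearMap.range (L3map q x y) := by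
        refine ⟨(0, x ^ ((mn.1 : ℕ) - 1) * y ^ (mn.2 : ℕ)), ?_⟩
        rw [L3_inr hyx]
        have : (mn.1 : ℕ) - 1 + 1 = (mn.1 : ℕ) := by omega
        rw [this, hb]
      have := Submodule.smul_mem (LinearMap.range (L3map q x y)) (q ^ (mn.2 : ℕ) - q)⁻¹ hz
      rwa [inv_smul_smul₀ hsub] at this
open scoped Classical in
lemma count_T {e : ℕ} (hp2 : 2 ≤ p) (he : 2 ≤ e) (hq : orderOf q = e) (hediv : e ∣ p - 1) :
    (Finset.univ.filter (fun mn : Fin p × Fin p =>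
      (1 ≤ (mn.2 : ℕ) ∧ q ^ (mn.1 : ℕ) ≠ q) ∨ (1 ≤ (mn.1 : ℕ) ∧ q ^ (mn.2 : ℕ) ≠ q))).card
      + (1 + ((p - 1) / e) * ((p - 1) / e)) = p * p := by
  have hp0 : 0 < p := by omega
  have hq1 : q ≠ 1 := by
    intro h
    rw [h, orderOf_one] at hq
    omega
  have hqe : q ^ e = 1 := by rw [← hq]; exact pow_orderOf_eq_one q
  have hq0 : q ≠ 0 := by
    intro h
    rw [h, zero_pow (by omega : e ≠ 0)] at hqe
    exact one_ne_zero hqe.symm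
  have hZiff : ∀ m : Fin p, q ^ (m : ℕ) = q ↔ 1 ≤ (m : ℕ) ∧ e ∣ (m : ℕ) - 1 := by
    intro m
    constructor
    · intro h
      have h1 : 1 ≤ (m : ℕ) := by
        rcases Nat.eq_zero_or_pos (m : ℕ) with h0 | h0
        · rw [h0, pow_zero] at h
          exact absurd h.symm hq1
        · exact h0
      refine ⟨h1, ?_⟩
      have h2 : q * q ^ ((m : ℕ) - 1) = q * 1 := by
        rw [mul_one, ← pow_succ', show (m : ℕ) - 1 + 1 = (m : ℕ) by omega]
        exact h
      have h3 := mul_left_cancel₀ hq0 h2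
      have h4 := orderOf_dvd_of_pow_eq_one h3
      rwa [hq] at h4
    · rintro ⟨h1, t, ht⟩
      have hm : (m : ℕ) = 1 + e * t := by omega
      rw [hm, pow_add, pow_one, pow_mul, hqe, one_pow, mul_one]
  set c := (p - 1) / e with hc
  have hec : e * c = p - 1 := Nat.mul_div_cancel' hediv
  set Zf : Finset (Fin p) := Finset.univ.filter (fun m : Fin p => q ^ (m : ℕ) = q) with hZf
  have hZcard : Zf.card = c := by
    rw [← Finset.card_range c]
    refine Finset.card_bij'
      (fun (m : Fin p) (_ : m ∈ Zf) => ((m : ℕ) - 1) / e)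
      (fun (t : ℕ) (ht : t ∈ Finset.range c) =>
        (⟨1 + e * t, by
          have htc : t < c := Finset.mem_range.mp ht
          have h2 : e * (t + 1) ≤ e * c := Nat.mul_le_mul_left e htc
          have h3 : e * (t + 1) = e * t + e := by ring
          omega⟩ : Fin p))
      ?_ ?_ ?_ ?_
    · intro m hm
      obtain ⟨h1, t, ht⟩ := (hZiff m).mp (Finset.mem_filter.mp hm).2
      have hmlt : (m : ℕ) < p := m.isLt
      rw [Finset.mem_range, Nat.div_lt_iff_lt_mul (by omega : 0 < e), Nat.mul_comm c e]
      omega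
    · intro t ht
      refine Finset.mem_filter.mpr ⟨Finset.mem_univ _, (hZiff _).mpr ?_⟩
      constructor
      · simp
      · exact ⟨t, by simp⟩
    · intro m hm
      obtain ⟨h1, hdvd⟩ := (hZiff m).mp (Finset.mem_filter.mp hm).2
      have := Nat.mul_div_cancel' hdvd
      ext
      simp only
      omega
    · intro t ht
      simp only [Nat.add_sub_cancel_left]
      exact Nat.mul_div_cancel_left t (by omega : 0 < e)
  have hcompl : Finset.univ.filter (fun mn : Fin p × Fin p =>
      ¬((1 ≤ (mn.2 : ℕ) ∧ q ^ (mn.1 : ℕ) ≠ q) ∨ (1 ≤ (mn.1 : ℕ) ∧ q ^ (mn.2 : ℕ) ≠ q)))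
      = insert ((⟨0, hp0⟩ : Fin p), (⟨0, hp0⟩ : Fin p)) (Zf ×ˢ Zf) := by
    ext mn
    simp only [hZf, Finset.mem_filter, Finset.mem_univ, true_and, Finset.mem_insert,
      Finset.mem_product]
    constructor
    · intro h
      push_neg at h
      obtain ⟨h1, h2⟩ := h
      by_cases hn : 1 ≤ (mn.2 : ℕ)
      · have hm' := h1 hn
        have hm1 : 1 ≤ (mn.1 : ℕ) := ((hZiff _).mp hm').1
        exact Or.inr ⟨hm', h2 hm1⟩
      · have hn0 : (mn.2 : ℕ) = 0 := by omega
        by_cases hm : 1 ≤ (mn.1 : ℕ)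
        · have h3 := h2 hm
          rw [hn0, pow_zero] at h3
          exact absurd h3.symm hq1
        · left
          have hm0 : (mn.1 : ℕ) = 0 := by omega
          ext
          · exact hm0
          · exact hn0
    · rintro (rfl | ⟨hm, hn⟩)
      · rintro (⟨h1, -⟩ | ⟨h1, -⟩) <;> simp at h1
      · rintro (⟨-, h⟩ | ⟨-, h⟩)
        · exact h hm
        · exact h hn
  have hnotmem : ((⟨0, hp0⟩ : Fin p), (⟨0, hp0⟩ : Fin p)) ∉ Zf ×ˢ Zf := by
    rw [Finset.mem_product]
    rintro ⟨h1, -⟩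
    have := (Finset.mem_filter.mp h1).2
    rw [pow_zero] at this
    exact hq1 this.symm
  have hfilter := Finset.card_filter_add_card_filter_not
    (s := (Finset.univ : Finset (Fin p × Fin p)))
    (p := fun mn : Fin p × Fin p =>
      (1 ≤ (mn.2 : ℕ) ∧ q ^ (mn.1 : ℕ) ≠ q) ∨ (1 ≤ (mn.1 : ℕ) ∧ q ^ (mn.2 : ℕ) ≠ q))
  rw [hcompl, Finset.card_insert_of_notMem hnotmem, Finset.card_product, hZcard,
    Finset.card_univ, Fintype.card_prod, Fintype.card_fin] at hfilter
  omega
end Main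
end QCIAux


/-- Lemma: `dim_k Der(A) = p² + 1 + ((p−1)/e)²` for the quantum complete intersection. -/
theorem dim_derivations_quantum_complete_intersection
    (k : Type*) [Field k] (p e : ℕ) (q : k)
    (hp : p.Prime) (hodd : Odd p) (hchar : CharP k p)
    (hq : orderOf q = e) (he : 2 ≤ e) (hediv : e ∣ p - 1)
    (A : Type*) [Ring A] [Algebra k A] (x y : A)
    (hx : x ^ p = 0) (hy : y ^ p = 0) (hyx : y * x = q • (x * y))
    (b : Module.Basis (Fin p × Fin p) k A)
    (hb : ∀ ij : Fin p × Fin p, b ij = x ^ (ij.1 : ℕ) * y ^ (ij.2 : ℕ)) :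
    Module.finrank k ↥(Der k A) = p ^ 2 + 1 + ((p - 1) / e) ^ 2 := by
  classical
  haveI := hchar
  haveI : Module.Finite k A := Module.Finite.of_basis b
  haveI : Module.Free k A := Module.Free.of_basis b
  have hp0 : 0 < p := hp.pos
  have hp2 : 2 ≤ p := hp.two_le
  have hq1 : q ≠ 1 := by
    intro h
    rw [h, orderOf_one] at hq
    omega
  have hqp1 : q ^ (p - 1) = 1 := orderOf_dvd_iff_pow_eq_one.mp (hq ▸ hediv)
  have hpk : (p : k) = 0 := CharP.cast_eq_zero k p
  -- the evaluation map on generators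
  let Φ : ↥(Der k A) →ₗ[k] A × A :=
    { toFun := fun f => ((f : Module.End k A) x, (f : Module.End k A) y)
      map_add' := fun f g => rfl
      map_smul' := fun c f => rfl }
  have hΦ : ∀ f : ↥(Der k A), Φ f = ((f : Module.End k A) x, (f : Module.End k A) y) :=
    fun f => rfl
  -- injectivity
  have hinj : Function.Injective Φ := by
    intro f g hfg
    have hfg1 : (f : Module.End k A) x = (g : Module.End k A) x := congrArg Prod.fst hfg
    have hfg2 : (f : Module.End k A) y = (g : Module.End k A) y := congrArg Prod.snd hfg
    have hDf : IsDeriv k A (f : Module.End k A) := f.2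
    have hDg : IsDeriv k A (g : Module.End k A) := g.2
    have : (f : Module.End k A) = (g : Module.End k A) := by
      refine Module.Basis.ext b fun ij => ?_
      rw [hb]
      rw [hDf (x ^ (ij.1 : ℕ)) (y ^ (ij.2 : ℕ)), hDg (x ^ (ij.1 : ℕ)) (y ^ (ij.2 : ℕ))]
      rw [QCIAux.isDeriv_pow hDf, QCIAux.isDeriv_pow hDg,
        QCIAux.isDeriv_pow hDf, QCIAux.isDeriv_pow hDg, hfg1, hfg2]
    exact Subtype.ext this
  -- the range of Φ is the kernel of the relation map
  have hrange : LinearMap.range Φ = LinearMap.ker (QCIAux.L3map q x y) := by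
    apply le_antisymm
    · rintro z ⟨f, rfl⟩
      rw [LinearMap.mem_ker, hΦ, QCIAux.L3map_apply]
      have hD : IsDeriv k A (f : Module.End k A) := f.2
      have h1 : (f : Module.End k A) (y * x)
          = y * (f : Module.End k A) x + (f : Module.End k A) y * x := hD y x
      have h2 : (f : Module.End k A) (q • (x * y))
          = q • (x * (f : Module.End k A) y) + q • ((f : Module.End k A) x * y) := by
        rw [map_smul, hD x y, smul_add]
      rw [hyx] at h1
      have h3 := h1.symm.trans h2
      calc (f : Module.End k A) y * x + y * (f : Module.End k A) x
            - q • ((f : Module.End k A) x * y) - q • (x * (f : Module.End k A) y)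
          = (y * (f : Module.End k A) x + (f : Module.End k A) y * x)
            - (q • (x * (f : Module.End k A) y) + q • ((f : Module.End k A) x * y)) := by
            abel
        _ = 0 := by rw [h3, sub_self]
    · rintro ⟨u, v⟩ hz
      have hker : v * x + y * u - q • (u * y) - q • (x * v) = 0 := by
        rw [← QCIAux.L3map_apply]
        exact hz
      have hcu : ∀ (j : ℕ) (hj : j + 1 < p), b.repr u (⟨0, hp0⟩, ⟨j, by omega⟩) = 0 :=
        fun j hj => QCIAux.coeff_u_zero hp0 hx hy hyx b hb u v hq1 hker j hj
      have hcv : ∀ (i : ℕ) (hi : i + 1 < p), b.repr v (⟨i, by omega⟩, ⟨0, hp0⟩) = 0 :=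
        fun i hi => QCIAux.coeff_v_zero hp0 hx hy hyx b hb u v hq1 hker i hi
      have hR1 := QCIAux.R1_of hp0 hx hy hyx b hb u hcu hqp1 hpk
      have hR2 := QCIAux.R2_of hp0 hx hy hyx b hb v hcv hqp1 hpk
      have hR3 : v * x + y * u = q • (u * y) + q • (x * v) := by
        rw [sub_sub, sub_eq_zero] at hker
        exact hker
      obtain ⟨f, hfD, hfx, hfy⟩ := QCIAux.extension hx hy hyx b hb u v hR1 hR2 hR3
      refine ⟨⟨f, hfD⟩, ?_⟩
      rw [hΦ]
      simp only [hfx, hfy]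
  -- dimension bookkeeping
  have e1 : Module.finrank k ↥(Der k A)
      = Module.finrank k ↥(LinearMap.ker (QCIAux.L3map q x y)) := by
    rw [← hrange]
    exact (LinearEquiv.ofInjective Φ hinj).finrank_eq
  have e2 := LinearMap.finrank_range_add_finrank_ker (QCIAux.L3map q x y)
  have e3 : Module.finrank k (A × A) = p * p + p * p := by
    rw [Module.finrank_prod, Module.finrank_eq_card_basis b, Fintype.card_prod,
      Fintype.card_fin]
  rw [e3] at e2
  set TF : Finset (Fin p × Fin p) := Finset.univ.filter (fun mn : Fin p × Fin p =>
      (1 ≤ (mn.2 : ℕ) ∧ q ^ (mn.1 : ℕ) ≠ q) ∨ (1 ≤ (mn.1 : ℕ) ∧ q ^ (mn.2 : ℕ) ≠ q))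
    with hTFdef
  have e4 : Module.finrank k ↥(LinearMap.range (QCIAux.L3map q x y)) = TF.card := by
    rw [QCIAux.range_L3 hx hy hyx b hb]
    have hTF : QCIAux.Tset q p = ↑TF := by
      ext mn
      simp [QCIAux.Tset, hTFdef]
    rw [hTF, Set.image_eq_range]
    exact (finrank_span_eq_card
      (b.linearIndependent.comp Subtype.val Subtype.val_injective)).trans
      (Fintype.card_coe TF)
  have e5 : TF.card + (1 + ((p - 1) / e) * ((p - 1) / e)) = p * p :=
    QCIAux.count_T hp2 he hq hediv
  rw [e4] at e2
  have hfinal : TF.card + Module.finrank k ↥(LinearMap.ker (QCIAux.L3map q x y))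
      = TF.card + (p * p + 1 + ((p - 1) / e) * ((p - 1) / e)) := by
    calc TF.card + Module.finrank k ↥(LinearMap.ker (QCIAux.L3map q x y))
        = p * p + p * p := e2
      _ = (TF.card + (1 + ((p - 1) / e) * ((p - 1) / e))) + p * p := by rw [e5]
      _ = TF.card + (p * p + 1 + ((p - 1) / e) * ((p - 1) / e)) := by ring
  have := Nat.add_left_cancel hfinal
  rw [e1, this, pow_two, pow_two]
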